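/- Let R be a finite TRS with defined symbols D (the root symbols of the left-hand sides of R). Let t = C[t₁,…,tₙ] where the n-hole context C contains no defined symbols and no variables, and each tᵢ has its root symbol in D ∪ V. Let σ be a substitution such that tσ is terminating with respect to →_R. Then dh(tσ, →_R) = dh(t₁σ, →_R) + ⋯ + dh(tₙσ, →_R). -/
import Mathlib

/-- First-order terms over a signature `F` (with arity function `ar`) and variables `V`. -/
inductive Tm (F : Type) (ar : F → ℕ) (V : Type) : Type where
  | var : V → Tm F ar V
  | fn : (f : F) → (Fin (ar f) → Tm F ar V) → Tm F ar V

namespace Tm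

variable {F : Type} {ar : F → ℕ} {V : Type}

/-- The size of a term: the number of occurrences of variables and function symbols. -/
def size : Tm F ar V → ℕ
  | var _ => 1
  | fn _ ts => 1 + ∑ i, (ts i).size

/-- Number of occurrences of the variable `x` in a term. -/
def count [DecidableEq V] (x : V) : Tm F ar V → ℕ
  | var y => if y = x then 1 else 0
  | fn _ ts => ∑ i, (ts i).count x

/-- Application of a substitution to a term. -/
def subst (σ : V → Tm F ar V) : Tm F ar V → Tm F ar V
  | var x => σ x
  | fn f ts => fn f fun i => (ts i).subst σ

/-- The set of function symbols occurring in a term. -/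
def funcs : Tm F ar V → Set F
  | var _ => ∅
  | fn f ts => insert f (⋃ i, (ts i).funcs)

end Tm

/-- `R` is a term rewrite system: left-hand sides are not variables and every variable
of a right-hand side occurs in the corresponding left-hand side. -/
def IsTRS {F : Type} {ar : F → ℕ} (R : Set (Tm F ar ℕ × Tm F ar ℕ)) : Prop :=
  ∀ p ∈ R, (∀ x : ℕ, p.1 ≠ Tm.var x) ∧
    ∀ x : ℕ, 0 < Tm.count x p.2 → 0 < Tm.count x p.1

/-- The rewrite relation of `R`: the closure of the rules under contexts and
substitutions. -/
inductive Rew {F : Type} {ar : F → ℕ} (R : Set (Tm F ar ℕ × Tm F ar ℕ)) :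
    Tm F ar ℕ → Tm F ar ℕ → Prop
  | rule {l r} (σ : ℕ → Tm F ar ℕ) : (l, r) ∈ R → Rew R (l.subst σ) (r.subst σ)
  | congr {f} {ts : Fin (ar f) → Tm F ar ℕ} (i) {t'} :
      Rew R (ts i) t' → Rew R (.fn f ts) (.fn f (Function.update ts i t'))

/-- A `ρ`-derivation of length `n`: `d 0 → d 1 → ⋯ → d n`. -/
def ChainOf {A : Type} (ρ : A → A → Prop) (n : ℕ) (d : ℕ → A) : Prop :=
  ∀ i < n, ρ (d i) (d (i + 1))

/-- The defined symbols of `R`: the root symbols of left-hand sides of rules of `R`. -/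
def DefinedSym {F : Type} {ar : F → ℕ} (R : Set (Tm F ar ℕ × Tm F ar ℕ)) : Set F :=
  {f | ∃ p ∈ R, ∃ ts, p.1 = Tm.fn f ts}

/-- `Decomp X t L` expresses that `t = C[t₁,…,tₙ]` where the context `C` contains no
`X`-rooted subterms (in particular, for `X` = "root in `D ∪ V`", no defined symbols and
no variables), each `tᵢ` is `X`-rooted, and `L = [t₁,…,tₙ]` lists these maximal
`X`-rooted subterms in order. -/
inductive Decomp {F : Type} {ar : F → ℕ} (X : Tm F ar ℕ → Prop) :
    Tm F ar ℕ → List (Tm F ar ℕ) → Prop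
  | leaf {t} : X t → Decomp X t [t]
  | node {f} {ts : Fin (ar f) → Tm F ar ℕ} (L : Fin (ar f) → List (Tm F ar ℕ)) :
      ¬ X (.fn f ts) → (∀ i, Decomp X (ts i) (L i)) →
      Decomp X (.fn f ts) (List.ofFn L).flatten

/-- `IsDH ρ s h` expresses that the derivation height of `s` with respect to the
relation `ρ` is the (well-defined) natural number `h`: some derivation from `s` has
length `h` and every derivation from `s` has length at most `h`. -/
def IsDH {A : Type} (ρ : A → A → Prop) (s : A) (h : ℕ) : Prop :=
  (∃ d : ℕ → A, d 0 = s ∧ ChainOf ρ h d) ∧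
  ∀ (m : ℕ) (d : ℕ → A), d 0 = s → ChainOf ρ m d → m ≤ h

/-! ### Auxiliary development -/

section Aux

variable {A : Type} {ρ : A → A → Prop}

/-- No infinite chain from `s`. -/
def Term' (ρ : A → A → Prop) (s : A) : Prop :=
  ¬ ∃ d : ℕ → A, d 0 = s ∧ ∀ i, ρ (d i) (d (i + 1))

lemma chainOf_shift {n : ℕ} {d : ℕ → A} (h : ChainOf ρ (n + 1) d) :
    ChainOf ρ n (fun i => d (i + 1)) := fun i hi => h (i + 1) (by omega)

lemma chainOf_cons {n : ℕ} {d : ℕ → A} {s : A} (hs : ρ s (d 0)) (h : ChainOf ρ n d) :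
    ChainOf ρ (n + 1) (fun i => Nat.rec s (fun k _ => d k) i) := by
  intro i hi
  cases i with
  | zero => exact hs
  | succ k => exact h k (by omega)

lemma term'_step {s t : A} (hs : Term' ρ s) (hst : ρ s t) : Term' ρ t := by
  rintro ⟨d, hd0, hd⟩
  refine hs ⟨fun i => Nat.rec s (fun k _ => d k) i, rfl, ?_⟩
  intro i
  cases i with
  | zero => simpa [hd0] using hst
  | succ k => exact hd k

lemma acc_of_term' {s : A} (hs : Term' ρ s) : Acc (fun a b => ρ b a) s := by
  by_contra hacc
  have key : ∀ a : A, ¬ Acc (fun a b => ρ b a) a →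
      ∃ b, ρ a b ∧ ¬ Acc (fun a b => ρ b a) b := by
    intro a ha
    by_contra hb
    push_neg at hb
    exact ha (Acc.intro a fun y hy => (hb y hy))
  let f : ℕ → {a : A // ¬ Acc (fun a b => ρ b a) a} := fun n =>
    Nat.rec ⟨s, hacc⟩ (fun _ p =>
      ⟨(key p.1 p.2).choose, (key p.1 p.2).choose_spec.2⟩) n
  refine hs ⟨fun n => (f n).1, rfl, fun i => ?_⟩
  exact (key (f i).1 (f i).2).choose_spec.1

lemma isDH_term' {s : A} {h : ℕ} (hdh : IsDH ρ s h) : Term' ρ s := by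
  rintro ⟨d, hd0, hd⟩
  have := hdh.2 (h + 1) d hd0 (fun i _ => hd i)
  omega

/-- Existence of derivation height for finitely branching terminating points. -/
lemma exists_isDH (fb : ∀ a : A, {b | ρ a b}.Finite) :
    ∀ s : A, Acc (fun a b => ρ b a) s → ∃ h, IsDH ρ s h := by
  intro s hacc
  induction hacc with
  | intro s _ ih =>
    classical
    choose! H hH using ih
    by_cases hne : ∃ t, ρ s t
    · set T := (fb s).toFinset with hT
      have hTne : T.Nonempty := by
        obtain ⟨t, ht⟩ := hne
        exact ⟨t, by simp [hT, ht]⟩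
      obtain ⟨b, hbT, hbs⟩ := T.exists_mem_eq_sup hTne H
      have hbρ : ρ s b := by simpa [hT] using hbT
      refine ⟨T.sup H + 1, ?_, ?_⟩
      · obtain ⟨d, hd0, hd⟩ := (hH b hbρ).1
        refine ⟨fun i => Nat.rec s (fun k _ => d k) i, rfl, ?_⟩
        rw [hbs]
        exact chainOf_cons (by rwa [hd0]) hd
      · intro m d hd0 hd
        cases m with
        | zero => omega
        | succ m =>
          have h1 : ρ s (d 1) := by
            have := hd 0 (by omega); rwa [hd0] at this
          have hm : m ≤ H (d 1) :=
            (hH (d 1) h1).2 m (fun i => d (i + 1)) rfl (chainOf_shift hd)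
          have : H (d 1) ≤ T.sup H := Finset.le_sup (by simp [hT, h1])
          omega
    · push_neg at hne
      refine ⟨0, ⟨fun _ => s, rfl, fun i hi => by omega⟩, ?_⟩
      intro m d hd0 hd
      by_contra hm
      exact hne (d 1) (by rw [← hd0]; exact hd 0 (by omega))

/-- The first step of a maximal chain. -/
lemma isDH_max {s : A} {h : ℕ} (hdh : IsDH ρ s h) (hpos : 0 < h) :
    ∃ t, ρ s t ∧ IsDH ρ t (h - 1) := by
  obtain ⟨d, hd0, hd⟩ := hdh.1
  refine ⟨d 1, by rw [← hd0]; exact hd 0 hpos, ⟨⟨fun i => d (i + 1), rfl, ?_⟩, ?_⟩⟩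
  · intro i hi
    exact hd (i + 1) (by omega)
  · intro m e he0 he
    have := hdh.2 (m + 1) (fun i => Nat.rec s (fun k _ => e k) i) rfl
      (chainOf_cons (by rw [he0, ← hd0]; exact hd 0 hpos) he)
    omega

lemma isDH_step (fb : ∀ a : A, {b | ρ a b}.Finite) {s t : A} {h : ℕ}
    (hdh : IsDH ρ s h) (hst : ρ s t) : ∃ h', h' < h ∧ IsDH ρ t h' := by
  obtain ⟨h', hdh'⟩ := exists_isDH fb t (acc_of_term' (term'_step (isDH_term' hdh) hst))
  refine ⟨h', ?_, hdh'⟩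
  obtain ⟨d, hd0, hd⟩ := hdh'.1
  have := hdh.2 (h' + 1) (fun i => Nat.rec s (fun k _ => d k) i) rfl
    (chainOf_cons (by rwa [hd0]) hd)
  omega

end Aux

section TRS

variable {F : Type} {ar : F → ℕ}

lemma count_pos_of_arg {f : F} {ts : Fin (ar f) → Tm F ar ℕ} {x : ℕ} (i : Fin (ar f))
    (h : 0 < (ts i).count x) : 0 < (Tm.fn f ts).count x := by
  have : (ts i).count x ≤ ∑ j, (ts j).count x :=
    Finset.single_le_sum (f := fun j => (ts j).count x)
      (fun j _ => Nat.zero_le _) (Finset.mem_univ i)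
  simpa [Tm.count] using lt_of_lt_of_le h this

lemma exists_arg_count_pos {f : F} {ts : Fin (ar f) → Tm F ar ℕ} {x : ℕ}
    (h : 0 < (Tm.fn f ts).count x) : ∃ i, 0 < (ts i).count x := by
  by_contra hc
  push_neg at hc
  simp only [Nat.le_zero] at hc
  simp [Tm.count, Finset.sum_eq_zero (fun i _ => hc i)] at h

lemma subst_eq_of_agree {t : Tm F ar ℕ} {σ τ : ℕ → Tm F ar ℕ}
    (h : ∀ x, 0 < t.count x → σ x = τ x) : t.subst σ = t.subst τ := by
  induction t with
  | var x => exact h x (by simp [Tm.count])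
  | fn f ts ih =>
    simp only [Tm.subst]
    congr 1
    funext i
    exact ih i fun x hx => h x (count_pos_of_arg i hx)

lemma agree_of_subst_eq {t : Tm F ar ℕ} {σ τ : ℕ → Tm F ar ℕ}
    (h : t.subst σ = t.subst τ) : ∀ x, 0 < t.count x → σ x = τ x := by
  induction t with
  | var x =>
    intro y hy
    have : x = y := by by_contra hxy; simp [Tm.count, hxy] at hy
    subst this
    simpa [Tm.subst] using h
  | fn f ts ih =>
    intro x hx
    obtain ⟨i, hi⟩ := exists_arg_count_pos hx
    simp only [Tm.subst] at h
    injection h with h1 h2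
    exact ih i (congrFun h2 i) x hi

variable {R : Finset (Tm F ar ℕ × Tm F ar ℕ)}

lemma rew_cases {s v : Tm F ar ℕ}
    (h : Rew (↑R : Set (Tm F ar ℕ × Tm F ar ℕ)) s v) :
    (∃ l r τ, (l, r) ∈ R ∧ s = l.subst τ ∧ v = r.subst τ) ∨
    (∃ f, ∃ ts : Fin (ar f) → Tm F ar ℕ, ∃ i t', s = Tm.fn f ts ∧
      Rew (↑R : Set (Tm F ar ℕ × Tm F ar ℕ)) (ts i) t' ∧
      v = Tm.fn f (Function.update ts i t')) := by
  cases h with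
  | rule τ hmem => exact Or.inl ⟨_, _, τ, hmem, rfl, rfl⟩
  | congr i hst => exact Or.inr ⟨_, _, i, _, rfl, hst, rfl⟩

lemma rule_succ_subsingleton (hTRS : IsTRS (↑R : Set (Tm F ar ℕ × Tm F ar ℕ)))
    {p : Tm F ar ℕ × Tm F ar ℕ} (hp : p ∈ R) (s : Tm F ar ℕ) :
    Set.Subsingleton {t | ∃ τ : ℕ → Tm F ar ℕ, s = p.1.subst τ ∧ t = p.2.subst τ} := by
  rintro a ⟨τ, hτ1, hτ2⟩ b ⟨κ, hκ1, hκ2⟩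
  rw [hτ2, hκ2]
  apply subst_eq_of_agree
  intro y hy
  exact agree_of_subst_eq (hτ1 ▸ hκ1) y ((hTRS p hp).2 y hy)

/-- Finite branching. -/
lemma rew_finite (hTRS : IsTRS (↑R : Set (Tm F ar ℕ × Tm F ar ℕ)))
    (s : Tm F ar ℕ) : {t | Rew (↑R : Set (Tm F ar ℕ × Tm F ar ℕ)) s t}.Finite := by
  classical
  induction s with
  | var x =>
    apply Set.Finite.subset ((R.finite_toSet).biUnion
      (fun p hp => ((rule_succ_subsingleton hTRS hp (Tm.var x))).finite))
    intro t ht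
    rcases rew_cases ht with ⟨l, r, τ, hmem, h1, h2⟩ | ⟨f, ts, i, t', hs, _, _⟩
    · exact Set.mem_biUnion hmem ⟨τ, h1, h2⟩
    · exact absurd hs (by simp)
  | fn f ts ih =>
    apply Set.Finite.subset
      (Set.Finite.union
        ((R.finite_toSet).biUnion
          (fun p hp => ((rule_succ_subsingleton hTRS hp (Tm.fn f ts))).finite))
        (Set.finite_iUnion (f := fun i : Fin (ar f) =>
          (fun t' => Tm.fn f (Function.update ts i t')) ''
            {t' | Rew (↑R : Set (Tm F ar ℕ × Tm F ar ℕ)) (ts i) t'})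
          (fun i => ((ih i).image _))))
    intro t ht
    rcases rew_cases ht with ⟨l, r, τ, hmem, h1, h2⟩ | ⟨g, us, i, t', hs, hst, hv⟩
    · exact Or.inl (Set.mem_biUnion hmem ⟨τ, h1, h2⟩)
    · refine Or.inr (Set.mem_iUnion.2 ?_)
      injection hs with h1 h2
      subst h1
      have h2 := eq_of_heq h2
      subst h2
      exact ⟨i, t', hst, hv.symm⟩

/-- Root steps are impossible at undefined symbols: every step from `fn f us` with
`f ∉ D` is an argument step. -/
lemma rew_fn_inv (hTRS : IsTRS (↑R : Set (Tm F ar ℕ × Tm F ar ℕ)))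
    {f : F} (hf : f ∉ DefinedSym (↑R : Set (Tm F ar ℕ × Tm F ar ℕ)))
    {us : Fin (ar f) → Tm F ar ℕ} {v : Tm F ar ℕ}
    (h : Rew (↑R : Set (Tm F ar ℕ × Tm F ar ℕ)) (Tm.fn f us) v) :
    ∃ i t', Rew (↑R : Set (Tm F ar ℕ × Tm F ar ℕ)) (us i) t' ∧
      v = Tm.fn f (Function.update us i t') := by
  rcases rew_cases h with ⟨l, r, τ, hmem, h1, h2⟩ | ⟨g, ts, i, t', hs, hst, hv⟩
  · exfalso
    cases l with
    | var x => exact (hTRS (Tm.var x, r) hmem).1 x rfl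
    | fn g ls =>
      simp only [Tm.subst] at h1
      injection h1 with hg _
      subst hg
      exact hf ⟨(Tm.fn f ls, r), hmem, ls, rfl⟩
  · injection hs with h1 h2
    subst h1
    have h2 := eq_of_heq h2
    subst h2
    exact ⟨i, t', hst, hv⟩


/-- Lower bound: a chain of length `∑ h i` from `fn f us`. -/
lemma exists_chain_fn {f : F} :
    ∀ (n : ℕ) (us : Fin (ar f) → Tm F ar ℕ) (h : Fin (ar f) → ℕ),
      (∀ i, IsDH (Rew (↑R : Set (Tm F ar ℕ × Tm F ar ℕ))) (us i) (h i)) → ∑ i, h i = n →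
      ∃ d, d 0 = Tm.fn f us ∧ ChainOf (Rew (↑R : Set (Tm F ar ℕ × Tm F ar ℕ))) n d := by
  classical
  intro n
  induction n with
  | zero => exact fun us h _ _ => ⟨fun _ => Tm.fn f us, rfl, fun i hi => by omega⟩
  | succ n ihn =>
    intro us h hdh hsum
    have : ∃ i, 0 < h i := by
      by_contra hc
      push_neg at hc
      simp only [Nat.le_zero] at hc
      rw [Finset.sum_eq_zero (fun i _ => hc i)] at hsum
      omega
    obtain ⟨i, hi⟩ := this
    obtain ⟨t', hstep, hdh'⟩ := isDH_max (hdh i) hi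
    have h2 : h i + ∑ j ∈ Finset.univ \ {i}, h j = ∑ j, h j := by
      rw [← Finset.erase_eq]
      exact Finset.add_sum_erase _ h (Finset.mem_univ i)
    have hsum' : ∑ j, Function.update h i (h i - 1) j = n := by
      rw [Finset.sum_update_of_mem (Finset.mem_univ i)]
      omega
    obtain ⟨d, hd0, hd⟩ := ihn (Function.update us i t') (Function.update h i (h i - 1))
      (fun j => by
        rcases eq_or_ne j i with rfl | hj
        · simpa using hdh'
        · simpa [Function.update_of_ne hj] using hdh j) hsum'
    refine ⟨fun k => Nat.rec (Tm.fn f us) (fun k _ => d k) k, rfl, ?_⟩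
    exact chainOf_cons (by rw [hd0]; exact Rew.congr i hstep) hd

/-- Upper bound: every chain from `fn f us` has length at most `∑ h i`. -/
lemma chain_le_fn (hTRS : IsTRS (↑R : Set (Tm F ar ℕ × Tm F ar ℕ)))
    {f : F} (hf : f ∉ DefinedSym (↑R : Set (Tm F ar ℕ × Tm F ar ℕ))) :
    ∀ (m : ℕ) (us : Fin (ar f) → Tm F ar ℕ) (h : Fin (ar f) → ℕ) (d : ℕ → Tm F ar ℕ),
      (∀ i, IsDH (Rew (↑R : Set (Tm F ar ℕ × Tm F ar ℕ))) (us i) (h i)) → d 0 = Tm.fn f us → ChainOf (Rew (↑R : Set (Tm F ar ℕ × Tm F ar ℕ))) m d →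
      m ≤ ∑ i, h i := by
  classical
  intro m
  induction m with
  | zero => intros; omega
  | succ m ihm =>
    intro us h d hdh hd0 hd
    have hstep : (Rew (↑R : Set (Tm F ar ℕ × Tm F ar ℕ))) (Tm.fn f us) (d 1) := by
      have := hd 0 (by omega); rwa [hd0] at this
    obtain ⟨i, t', hst, hv⟩ := rew_fn_inv hTRS hf hstep
    obtain ⟨h', hh', hdh'⟩ := isDH_step (rew_finite hTRS) (hdh i) hst
    have hm : m ≤ ∑ j, Function.update h i h' j := by
      refine ihm (Function.update us i t') (Function.update h i h')
        (fun k => d (k + 1)) (fun j => ?_) (by exact hv) (chainOf_shift hd)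
      rcases eq_or_ne j i with rfl | hj
      · simpa using hdh'
      · simpa [Function.update_of_ne hj] using hdh j
    have e1 : ∑ j, Function.update h i h' j = h' + ∑ j ∈ Finset.univ \ {i}, h j :=
      Finset.sum_update_of_mem (Finset.mem_univ i) _ _
    have e2 : h i + ∑ j ∈ Finset.univ \ {i}, h j = ∑ j, h j := by
      rw [← Finset.erase_eq]
      exact Finset.add_sum_erase _ h (Finset.mem_univ i)
    omega

lemma isDH_fn (hTRS : IsTRS (↑R : Set (Tm F ar ℕ × Tm F ar ℕ)))
    {f : F} (hf : f ∉ DefinedSym (↑R : Set (Tm F ar ℕ × Tm F ar ℕ)))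
    {us : Fin (ar f) → Tm F ar ℕ} {h : Fin (ar f) → ℕ}
    (hdh : ∀ i, IsDH (Rew (↑R : Set (Tm F ar ℕ × Tm F ar ℕ))) (us i) (h i)) : IsDH (Rew (↑R : Set (Tm F ar ℕ × Tm F ar ℕ))) (Tm.fn f us) (∑ i, h i) :=
  ⟨exists_chain_fn (∑ i, h i) us h hdh rfl,
   fun m d hd0 hd => chain_le_fn hTRS hf m us h d hdh hd0 hd⟩

lemma term'_arg {f : F} {us : Fin (ar f) → Tm F ar ℕ}
    (hterm : Term' (Rew (↑R : Set (Tm F ar ℕ × Tm F ar ℕ))) (Tm.fn f us)) (i : Fin (ar f)) : Term' (Rew (↑R : Set (Tm F ar ℕ × Tm F ar ℕ))) (us i) := by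
  rintro ⟨d, hd0, hd⟩
  refine hterm ⟨fun n => Tm.fn f (Function.update us i (d n)), ?_, fun n => ?_⟩
  · show Tm.fn f (Function.update us i (d 0)) = _
    rw [hd0, Function.update_eq_self]
  · have : Rew (↑R : Set (Tm F ar ℕ × Tm F ar ℕ))
        (Tm.fn f (Function.update us i (d n)))
        (Tm.fn f (Function.update (Function.update us i (d n)) i (d (n + 1)))) :=
      Rew.congr i (by rw [Function.update_self]; exact hd n)
    rwa [Function.update_idem] at this

lemma forall₂_flatten {α β : Type*} {r : α → β → Prop}
    {l : List (List α)} {m : List (List β)}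
    (h : List.Forall₂ (List.Forall₂ r) l m) :
    List.Forall₂ r l.flatten m.flatten :=
  List.rel_flatten h

/-- Main induction. -/
lemma decomp_main (hTRS : IsTRS (↑R : Set (Tm F ar ℕ × Tm F ar ℕ)))
    {X : Tm F ar ℕ → Prop}
    (hX : ∀ f (ts : Fin (ar f) → Tm F ar ℕ), ¬ X (Tm.fn f ts) →
      f ∉ DefinedSym (↑R : Set (Tm F ar ℕ × Tm F ar ℕ)))
    {t : Tm F ar ℕ} {L : List (Tm F ar ℕ)} (hdec : Decomp X t L)
    (σ : ℕ → Tm F ar ℕ) (hterm : Term' (Rew (↑R : Set (Tm F ar ℕ × Tm F ar ℕ))) (t.subst σ)) :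
    ∃ hs : List ℕ,
      List.Forall₂ (fun u h => IsDH (Rew (↑R : Set (Tm F ar ℕ × Tm F ar ℕ))) (u.subst σ) h) L hs ∧
      IsDH (Rew (↑R : Set (Tm F ar ℕ × Tm F ar ℕ))) (t.subst σ) hs.sum := by
  induction hdec with
  | leaf hx =>
    obtain ⟨h, hdh⟩ := exists_isDH (rew_finite hTRS) _ (acc_of_term' hterm)
    exact ⟨[h], by simp [List.forall₂_cons, hdh], by simpa using hdh⟩
  | @node f ts L hnx hdecs ih =>
    have hf := hX f ts hnx
    have hterm' : ∀ i, Term' (Rew (↑R : Set (Tm F ar ℕ × Tm F ar ℕ))) ((ts i).subst σ) := by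
      intro i
      have := term'_arg (f := f) (us := fun j => (ts j).subst σ) (by
        simpa [Tm.subst] using hterm) i
      simpa using this
    choose hs hhs hdhs using fun i => ih i (hterm' i)
    refine ⟨(List.ofFn hs).flatten, ?_, ?_⟩
    · apply forall₂_flatten
      rw [List.forall₂_iff_get]
      refine ⟨by simp, ?_⟩
      intro i h1 h2
      simpa using hhs ⟨i, by simpa using h1⟩
    · have hsum : ((List.ofFn hs).flatten).sum = ∑ i, (hs i).sum := by
        rw [List.sum_flatten, List.map_ofFn, List.sum_ofFn]
        rfl
      rw [hsum]
      simpa [Tm.subst] using isDH_fn hTRS hf (us := fun i => (ts i).subst σ) hdhs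

end TRS

/-- Let `R` be a finite TRS with defined symbols `D`, let
`t = C[t₁,…,tₙ]` where `C` contains no defined symbols and no variables and each `tᵢ`
has its root in `D ∪ V`, and let `σ` be a substitution with `tσ` terminating.  Then
`dh(tσ, →_R) = dh(t₁σ, →_R) + ⋯ + dh(tₙσ, →_R)` (all derivation heights being
well-defined natural numbers). -/
theorem dh_decomposition {F : Type} {ar : F → ℕ}
    (R : Finset (Tm F ar ℕ × Tm F ar ℕ))
    (hTRS : IsTRS (↑R : Set (Tm F ar ℕ × Tm F ar ℕ)))
    (t : Tm F ar ℕ) (L : List (Tm F ar ℕ))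
    (hdec : Decomp
      (fun u => (∃ x, u = Tm.var x) ∨
        (∃ f ts, u = Tm.fn f ts ∧ f ∈ DefinedSym (↑R : Set (Tm F ar ℕ × Tm F ar ℕ))))
      t L)
    (σ : ℕ → Tm F ar ℕ)
    (hterm : ¬ ∃ d : ℕ → Tm F ar ℕ, d 0 = t.subst σ ∧
      ∀ i, Rew (↑R : Set (Tm F ar ℕ × Tm F ar ℕ)) (d i) (d (i + 1))) :
    ∃ hs : List ℕ,
      List.Forall₂ (fun u h =>
        IsDH (Rew (↑R : Set (Tm F ar ℕ × Tm F ar ℕ))) (u.subst σ) h) L hs ∧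
      IsDH (Rew (↑R : Set (Tm F ar ℕ × Tm F ar ℕ))) (t.subst σ) hs.sum := by
  refine decomp_main hTRS ?_ hdec σ hterm
  intro f ts hnx hfD
  exact hnx (Or.inr ⟨f, ts, rfl, hfD⟩)
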